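/- Let J = (1/√3)·[[0,1,−1,−1],[−1,0,−1,1],[1,1,0,1],[1,−1,−1,0]]. Then J is orthogonal (JᵀJ = I) and J² = −I, so J defines a complex structure on ℝ⁴; moreover the centralizer of J in the group G of 4×4 signed permutation matrices equals the subgroup generated by γ1 = ρ1ρ2ρ3ρ2 and γ2 = ρ2ρ0ρ1ρ0, this centralizer has order 24, and the generators satisfy γ1³ = I and γ1γ2γ1 = γ2γ1γ2 (the defining relations of the unitary group 3[3]3 of the regular complex polygon 3{3}3). -/

import Mathlib

open Matrix

/-- The general linear group of `4 × 4` real matrices. -/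
abbrev GL4 := GL (Fin 4) ℝ

/-- rho0 : the reflection `ρ0 = diag(−1,1,1,1)`. -/
def rho0 : GL4 :=
  ⟨!![-1,0,0,0; 0,1,0,0; 0,0,1,0; 0,0,0,1],
   !![-1,0,0,0; 0,1,0,0; 0,0,1,0; 0,0,0,1],
   by ext i j; fin_cases i <;> fin_cases j <;>
      simp [Matrix.mul_apply, Fin.sum_univ_four, Matrix.one_apply, Matrix.vecHead, Matrix.vecTail],
   by ext i j; fin_cases i <;> fin_cases j <;>
      simp [Matrix.mul_apply, Fin.sum_univ_four, Matrix.one_apply, Matrix.vecHead, Matrix.vecTail]⟩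

/-- rho1 : the permutation matrix transposing coordinates 1 and 2. -/
def rho1 : GL4 :=
  ⟨!![0,1,0,0; 1,0,0,0; 0,0,1,0; 0,0,0,1],
   !![0,1,0,0; 1,0,0,0; 0,0,1,0; 0,0,0,1],
   by ext i j; fin_cases i <;> fin_cases j <;>
      simp [Matrix.mul_apply, Fin.sum_univ_four, Matrix.one_apply, Matrix.vecHead, Matrix.vecTail],
   by ext i j; fin_cases i <;> fin_cases j <;>
      simp [Matrix.mul_apply, Fin.sum_univ_four, Matrix.one_apply, Matrix.vecHead, Matrix.vecTail]⟩

/-- rho2 : the permutation matrix transposing coordinates 2 and 3. -/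
def rho2 : GL4 :=
  ⟨!![1,0,0,0; 0,0,1,0; 0,1,0,0; 0,0,0,1],
   !![1,0,0,0; 0,0,1,0; 0,1,0,0; 0,0,0,1],
   by ext i j; fin_cases i <;> fin_cases j <;>
      simp [Matrix.mul_apply, Fin.sum_univ_four, Matrix.one_apply, Matrix.vecHead, Matrix.vecTail],
   by ext i j; fin_cases i <;> fin_cases j <;>
      simp [Matrix.mul_apply, Fin.sum_univ_four, Matrix.one_apply, Matrix.vecHead, Matrix.vecTail]⟩

/-- rho3 : the permutation matrix transposing coordinates 3 and 4. -/
def rho3 : GL4 :=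
  ⟨!![1,0,0,0; 0,1,0,0; 0,0,0,1; 0,0,1,0],
   !![1,0,0,0; 0,1,0,0; 0,0,0,1; 0,0,1,0],
   by ext i j; fin_cases i <;> fin_cases j <;>
      simp [Matrix.mul_apply, Fin.sum_univ_four, Matrix.one_apply, Matrix.vecHead, Matrix.vecTail],
   by ext i j; fin_cases i <;> fin_cases j <;>
      simp [Matrix.mul_apply, Fin.sum_univ_four, Matrix.one_apply, Matrix.vecHead, Matrix.vecTail]⟩


/-- The complex-structure matrix `J`. -/
noncomputable def Jmat : Matrix (Fin 4) (Fin 4) ℝ :=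
  (1 / Real.sqrt 3) • !![0,1,-1,-1; -1,0,-1,1; 1,1,0,1; 1,-1,-1,0]

/-- `γ1 = ρ1 ρ2 ρ3 ρ2`. -/
def gamma1 : GL4 := rho1 * rho2 * rho3 * rho2

/-- `γ2 = ρ2 ρ0 ρ1 ρ0`. -/
def gamma2 : GL4 := rho2 * rho0 * rho1 * rho0

/- ## Integer-side infrastructure -/

def sgn (b : Bool) : ℤ := cond b 1 (-1)

def Mp (p : Fin 4 → Fin 4) (ε : Fin 4 → Bool) : Matrix (Fin 4) (Fin 4) ℤ :=
  Matrix.of fun i j => if i = p j then sgn (ε j) else 0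

def Kz : Matrix (Fin 4) (Fin 4) ℤ := !![0,1,-1,-1; -1,0,-1,1; 1,1,0,1; 1,-1,-1,0]

def gz1 : Matrix (Fin 4) (Fin 4) ℤ := !![0,0,0,1; 1,0,0,0; 0,0,1,0; 0,1,0,0]
def gz2 : Matrix (Fin 4) (Fin 4) ℤ := !![0,-1,0,0; 0,0,1,0; -1,0,0,0; 0,0,0,1]

def wev {M : Type*} [Monoid M] (a b : M) : List Bool → M
  | [] => 1
  | (x :: l) => (cond x b a) * wev a b l

def zwords : List (List Bool) :=
  [[], [false], [true], [false, false], [false, true], [true, false], [true, true],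
   [false, false, true], [false, true, false], [false, true, true], [true, false, false],
   [true, true, false], [false, false, true, false], [false, false, true, true],
   [false, true, false, false], [false, true, true, false], [true, false, false, true],
   [true, true, false, false], [false, false, true, false, false],
   [false, false, true, true, false], [false, true, false, false, true],
   [false, true, true, false, false], [false, false, true, false, false, true],
   [false, false, true, true, false, false]]

def zmats : List (Matrix (Fin 4) (Fin 4) ℤ) := zwords.map (wev gz1 gz2)

set_option maxHeartbeats 4000000 in
set_option maxRecDepth 10000 in
lemma cent_sub : ∀ p : Fin 4 → Fin 4, ∀ ε : Fin 4 → Bool,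
    Mp p ε * Kz = Kz * Mp p ε → Mp p ε ∈ zmats := by decide

set_option maxHeartbeats 1000000 in
set_option maxRecDepth 10000 in
lemma zmats_nodup : zmats.Nodup := by decide

lemma Mp_mul (p q : Fin 4 → Fin 4) (ε δ : Fin 4 → Bool) :
    Mp p ε * Mp q δ = Mp (p ∘ q) (fun j => ε (q j) == δ j) := by
  ext i j
  simp only [Matrix.mul_apply, Mp, Matrix.of_apply]
  rw [Finset.sum_eq_single_of_mem (q j) (Finset.mem_univ _) (fun k _ hk => by simp [hk])]
  by_cases h : i = p (q j)
  · cases hε : ε (q j) <;> cases hδ : δ j <;> simp [h, sgn, Function.comp, hε, hδ]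
  · simp [h, sgn, Function.comp]

lemma Mp_one : Mp id (fun _ => true) = 1 := by
  ext i j
  by_cases h : i = j <;> simp [Mp, Matrix.one_apply, sgn, h]

/- ## Casting to ℝ -/

noncomputable def castm (m : Matrix (Fin 4) (Fin 4) ℤ) : Matrix (Fin 4) (Fin 4) ℝ :=
  m.map (Int.cast)

lemma castm_mul (m n : Matrix (Fin 4) (Fin 4) ℤ) : castm (m * n) = castm m * castm n :=
  Matrix.map_mul (f := Int.castRingHom ℝ)

lemma castm_one : castm 1 = 1 := by
  ext i j; simp [castm, Matrix.map_apply, Matrix.one_apply, apply_ite (Int.cast : ℤ → ℝ)]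

lemma castm_inj {m n : Matrix (Fin 4) (Fin 4) ℤ} (h : castm m = castm n) : m = n := by
  ext i j
  have := congrFun (congrFun (congrArg (fun M => (M : Matrix (Fin 4) (Fin 4) ℝ)) h) i) j
  simpa [castm, Matrix.map_apply] using Int.cast_injective this

/- generators as signed permutation matrices -/

lemma rho0_form : (↑rho0 : Matrix (Fin 4) (Fin 4) ℝ) = castm (Mp (Equiv.refl (Fin 4)) ![false,true,true,true]) := by
  ext i j; fin_cases i <;> fin_cases j <;>
    simp [rho0, castm, Mp, sgn, Matrix.map_apply, Matrix.vecHead, Matrix.vecTail]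

lemma rho1_form : (↑rho1 : Matrix (Fin 4) (Fin 4) ℝ) = castm (Mp (Equiv.swap (0:Fin 4) 1) (fun _ => true)) := by
  ext i j; fin_cases i <;> fin_cases j <;>
    simp [rho1, castm, Mp, sgn, Matrix.map_apply, Matrix.vecHead, Matrix.vecTail,
      Equiv.swap_apply_def] <;> norm_num

lemma rho2_form : (↑rho2 : Matrix (Fin 4) (Fin 4) ℝ) = castm (Mp (Equiv.swap (1:Fin 4) 2) (fun _ => true)) := by
  ext i j; fin_cases i <;> fin_cases j <;>
    simp [rho2, castm, Mp, sgn, Matrix.map_apply, Matrix.vecHead, Matrix.vecTail,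
      Equiv.swap_apply_def] <;> norm_num

lemma rho3_form : (↑rho3 : Matrix (Fin 4) (Fin 4) ℝ) = castm (Mp (Equiv.swap (2:Fin 4) 3) (fun _ => true)) := by
  ext i j; fin_cases i <;> fin_cases j <;>
    simp [rho3, castm, Mp, sgn, Matrix.map_apply, Matrix.vecHead, Matrix.vecTail,
      Equiv.swap_apply_def] <;> norm_num

/- every element of the closure is a signed permutation matrix -/

lemma closure_form {g : GL4} (hg : g ∈ Subgroup.closure ({rho0, rho1, rho2, rho3} : Set GL4)) :
    ∃ (σ : Equiv.Perm (Fin 4)) (ε : Fin 4 → Bool),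
      (↑g : Matrix (Fin 4) (Fin 4) ℝ) = castm (Mp ⇑σ ε) := by
  induction hg using Subgroup.closure_induction with
  | mem x hx =>
    rcases hx with h | h | h | h
    · exact ⟨_, _, h ▸ rho0_form⟩
    · exact ⟨_, _, h ▸ rho1_form⟩
    · exact ⟨_, _, h ▸ rho2_form⟩
    · exact ⟨_, _, h ▸ rho3_form⟩
  | one => exact ⟨Equiv.refl _, fun _ => true, by simp [Mp_one, castm_one]⟩
  | mul x y hx hy ihx ihy =>
    obtain ⟨σ, ε, hσ⟩ := ihx
    obtain ⟨τ, δ, hτ⟩ := ihy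
    refine ⟨τ.trans σ, fun j => ε (τ j) == δ j, ?_⟩
    have : (⇑(τ.trans σ) : Fin 4 → Fin 4) = ⇑σ ∘ ⇑τ := rfl
    rw [Units.val_mul, hσ, hτ, ← castm_mul, Mp_mul, this]
  | inv x hx ih =>
    obtain ⟨σ, ε, hσ⟩ := ih
    refine ⟨σ⁻¹, fun j => ε (σ⁻¹ j), ?_⟩
    have h1 : Mp ⇑σ ε * Mp ⇑σ⁻¹ (fun j => ε (σ⁻¹ j)) = 1 := by
      rw [Mp_mul]
      have : (⇑σ ∘ ⇑σ⁻¹) = id := by funext j; simp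
      rw [this]
      have : (fun j => ε (⇑σ⁻¹ j) == ε (σ⁻¹ j)) = fun _ => true := by
        funext j; simp
      rw [this, Mp_one]
    have h2 : (↑x : Matrix (Fin 4) (Fin 4) ℝ) * castm (Mp ⇑σ⁻¹ (fun j => ε (σ⁻¹ j))) = 1 := by
      rw [hσ, ← castm_mul, h1, castm_one]
    calc (↑x⁻¹ : Matrix (Fin 4) (Fin 4) ℝ)
        = ↑x⁻¹ * (↑x * castm (Mp ⇑σ⁻¹ (fun j => ε (σ⁻¹ j)))) := by rw [h2, mul_one]
      _ = (↑x⁻¹ * ↑x) * castm (Mp ⇑σ⁻¹ (fun j => ε (σ⁻¹ j))) := by rw [mul_assoc]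
      _ = castm (Mp ⇑σ⁻¹ (fun j => ε (σ⁻¹ j))) := by
          rw [← Units.val_mul, inv_mul_cancel, Units.val_one, one_mul]


/- ## Real side -/

def Kr : Matrix (Fin 4) (Fin 4) ℝ := !![0,1,-1,-1; -1,0,-1,1; 1,1,0,1; 1,-1,-1,0]

lemma Kr_eq : Kr = castm Kz := by
  ext i j; fin_cases i <;> fin_cases j <;>
    simp [Kr, Kz, castm, Matrix.map_apply, Matrix.vecHead, Matrix.vecTail]

lemma sqrt3_ne : (1 / Real.sqrt 3 : ℝ) ≠ 0 :=
  one_div_ne_zero (ne_of_gt (Real.sqrt_pos.mpr (by norm_num)))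

lemma comm_iff (A : Matrix (Fin 4) (Fin 4) ℝ) : A * Jmat = Jmat * A ↔ A * Kr = Kr * A := by
  have hJ : Jmat = (1 / Real.sqrt 3) • Kr := rfl
  rw [hJ, Matrix.mul_smul, Matrix.smul_mul]
  constructor
  · intro h; exact smul_right_injective _ sqrt3_ne h
  · intro h; rw [h]

def commJ : Subgroup GL4 where
  carrier := {g | (↑g : Matrix (Fin 4) (Fin 4) ℝ) * Jmat = Jmat * ↑g}
  one_mem' := by simp
  mul_mem' := by
    intro a b ha hb
    have ha' : (↑a : Matrix (Fin 4) (Fin 4) ℝ) * Jmat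
        = Jmat * (↑a : Matrix (Fin 4) (Fin 4) ℝ) := ha
    have hb' : (↑b : Matrix (Fin 4) (Fin 4) ℝ) * Jmat
        = Jmat * (↑b : Matrix (Fin 4) (Fin 4) ℝ) := hb
    show (↑(a * b) : Matrix (Fin 4) (Fin 4) ℝ) * Jmat
        = Jmat * (↑(a * b) : Matrix (Fin 4) (Fin 4) ℝ)
    rw [Units.val_mul, mul_assoc, hb', ← mul_assoc, ha', mul_assoc]
  inv_mem' := by
    intro a ha
    show (↑a⁻¹ : Matrix (Fin 4) (Fin 4) ℝ) * Jmat
        = Jmat * (↑a⁻¹ : Matrix (Fin 4) (Fin 4) ℝ)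
    have ha' : (↑a : Matrix (Fin 4) (Fin 4) ℝ) * Jmat
        = Jmat * (↑a : Matrix (Fin 4) (Fin 4) ℝ) := ha
    have h := congrArg
      (fun m : Matrix (Fin 4) (Fin 4) ℝ =>
        (↑a⁻¹ : Matrix (Fin 4) (Fin 4) ℝ) * m * (↑a⁻¹ : Matrix (Fin 4) (Fin 4) ℝ)) ha'
    clear h
    calc (↑a⁻¹ : Matrix (Fin 4) (Fin 4) ℝ) * Jmat
        = ↑a⁻¹ * Jmat * (↑a * ↑a⁻¹) := by rw [Units.mul_inv, mul_one]
      _ = ↑a⁻¹ * (Jmat * ↑a) * ↑a⁻¹ := by simp only [mul_assoc]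
      _ = ↑a⁻¹ * (↑a * Jmat) * ↑a⁻¹ := by rw [← ha']
      _ = Jmat * ↑a⁻¹ := by
          simp only [← mul_assoc]
          rw [Units.inv_mul, one_mul]

def Grho : Subgroup GL4 := Subgroup.closure ({rho0, rho1, rho2, rho3} : Set GL4)
def Hsub : Subgroup GL4 := Subgroup.closure ({gamma1, gamma2} : Set GL4)

lemma gamma1_form : (↑gamma1 : Matrix (Fin 4) (Fin 4) ℝ) = castm gz1 := by
  show ((↑rho1 : Matrix (Fin 4) (Fin 4) ℝ) * (↑rho2 : Matrix (Fin 4) (Fin 4) ℝ) * (↑rho3 : Matrix (Fin 4) (Fin 4) ℝ) * (↑rho2 : Matrix (Fin 4) (Fin 4) ℝ) : Matrix (Fin 4) (Fin 4) ℝ) = castm gz1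
  ext i j; fin_cases i <;> fin_cases j <;>
    norm_num [rho1, rho2, rho3, gz1, castm, Matrix.map_apply, Matrix.mul_apply,
      Fin.sum_univ_four, Matrix.vecHead, Matrix.vecTail] <;>
    simp [Matrix.cons_val] <;> norm_num

lemma gamma2_form : (↑gamma2 : Matrix (Fin 4) (Fin 4) ℝ) = castm gz2 := by
  show ((↑rho2 : Matrix (Fin 4) (Fin 4) ℝ) * (↑rho0 : Matrix (Fin 4) (Fin 4) ℝ) * (↑rho1 : Matrix (Fin 4) (Fin 4) ℝ) * (↑rho0 : Matrix (Fin 4) (Fin 4) ℝ) : Matrix (Fin 4) (Fin 4) ℝ) = castm gz2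
  ext i j; fin_cases i <;> fin_cases j <;>
    norm_num [rho0, rho1, rho2, gz2, castm, Matrix.map_apply, Matrix.mul_apply,
      Fin.sum_univ_four, Matrix.vecHead, Matrix.vecTail] <;>
    simp [Matrix.cons_val] <;> norm_num

lemma wev_mem (w : List Bool) : wev gamma1 gamma2 w ∈ Hsub := by
  induction w with
  | nil => exact one_mem _
  | cons x l ih =>
    refine mul_mem ?_ ih
    cases x
    · exact Subgroup.subset_closure (by simp)
    · exact Subgroup.subset_closure (by simp)

lemma wev_cast (w : List Bool) :
    (↑(wev gamma1 gamma2 w) : Matrix (Fin 4) (Fin 4) ℝ) = castm (wev gz1 gz2 w) := by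
  induction w with
  | nil => simp [wev, castm_one]
  | cons x l ih =>
    cases x <;> simp [wev, Units.val_mul, ih, castm_mul, gamma1_form, gamma2_form]

lemma inf_le_words {g : GL4} (hg : g ∈ Grho ⊓ commJ) :
    g ∈ zwords.map (wev gamma1 gamma2) := by
  obtain ⟨hg1, hg2⟩ := Subgroup.mem_inf.mp hg
  obtain ⟨σ, ε, hform⟩ := closure_form hg1
  have hg2'' : (↑g : Matrix (Fin 4) (Fin 4) ℝ) * Jmat
      = Jmat * (↑g : Matrix (Fin 4) (Fin 4) ℝ) := hg2
  have hg2' : (↑g : Matrix (Fin 4) (Fin 4) ℝ) * Kr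
      = Kr * (↑g : Matrix (Fin 4) (Fin 4) ℝ) := (comm_iff _).mp hg2''
  have hcomm : Mp ⇑σ ε * Kz = Kz * Mp ⇑σ ε := by
    apply castm_inj
    rw [castm_mul, castm_mul, ← Kr_eq, ← hform]
    exact hg2'
  have hmem := cent_sub ⇑σ ε hcomm
  rw [zmats, List.mem_map] at hmem
  obtain ⟨w, hw, hweq⟩ := hmem
  have hgw : g = wev gamma1 gamma2 w := by
    apply Units.ext
    rw [hform, ← hweq, wev_cast]
  rw [List.mem_map]
  exact ⟨w, hw, hgw.symm⟩

lemma gz1_comm : gz1 * Kz = Kz * gz1 := by decide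
lemma gz2_comm : gz2 * Kz = Kz * gz2 := by decide

lemma main_eq : Grho ⊓ commJ = Hsub := by
  apply le_antisymm
  · intro g hg
    obtain ⟨w, _, hgw⟩ := List.mem_map.mp (inf_le_words hg)
    exact hgw ▸ wev_mem w
  · rw [Hsub, Subgroup.closure_le]
    have h0 : rho0 ∈ Grho := Subgroup.subset_closure (by simp)
    have h1 : rho1 ∈ Grho := Subgroup.subset_closure (by simp)
    have h2 : rho2 ∈ Grho := Subgroup.subset_closure (by simp)
    have h3 : rho3 ∈ Grho := Subgroup.subset_closure (by simp)
    rintro x (rfl | rfl)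
    · refine Subgroup.mem_inf.mpr ⟨mul_mem (mul_mem (mul_mem h1 h2) h3) h2, ?_⟩
      show (↑gamma1 : Matrix (Fin 4) (Fin 4) ℝ) * Jmat
          = Jmat * (↑gamma1 : Matrix (Fin 4) (Fin 4) ℝ)
      rw [comm_iff, gamma1_form, Kr_eq, ← castm_mul, ← castm_mul, gz1_comm]
    · refine Subgroup.mem_inf.mpr ⟨mul_mem (mul_mem (mul_mem h2 h0) h1) h0, ?_⟩
      show (↑gamma2 : Matrix (Fin 4) (Fin 4) ℝ) * Jmat
          = Jmat * (↑gamma2 : Matrix (Fin 4) (Fin 4) ℝ)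
      rw [comm_iff, gamma2_form, Kr_eq, ← castm_mul, ← castm_mul, gz2_comm]

lemma card24 : Nat.card Hsub = 24 := by
  classical
  have hset : (Hsub : Set GL4) = {x | x ∈ zwords.map (wev gamma1 gamma2)} := by
    ext g
    constructor
    · intro hg
      exact inf_le_words (main_eq ▸ hg)
    · rintro hg
      obtain ⟨w, _, hgw⟩ := List.mem_map.mp hg
      exact hgw ▸ wev_mem w
  have hmapped : (zwords.map (wev gamma1 gamma2)).map Units.val = zmats.map castm := by
    rw [zmats, List.map_map, List.map_map]
    exact List.map_congr_left (fun w _ => wev_cast w)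
  have hnodupm : ((zwords.map (wev gamma1 gamma2)).map Units.val).Nodup := by
    rw [hmapped]
    exact zmats_nodup.map (fun a b h => castm_inj h)
  have hnodup : (zwords.map (wev gamma1 gamma2)).Nodup := hnodupm.of_map _
  have h1 : Nat.card Hsub = ((Hsub : Set GL4)).ncard := by
    rw [← Nat.card_coe_set_eq]; rfl
  rw [h1, hset, ← List.coe_toFinset, Set.ncard_coe_finset,
    List.toFinset_card_of_nodup hnodup]
  simp [zwords]

lemma KrT_mul : Kr.transpose * Kr = (3 : ℝ) • 1 := by
  ext i j; fin_cases i <;> fin_cases j <;>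
    norm_num [Kr, Matrix.mul_apply, Matrix.transpose_apply, Fin.sum_univ_four,
      Matrix.one_apply, Matrix.smul_apply, Matrix.vecHead, Matrix.vecTail, Fin.ext_iff] <;>
    simp [Matrix.cons_val] <;> norm_num

lemma Kr_sq : Kr * Kr = (-3 : ℝ) • 1 := by
  ext i j; fin_cases i <;> fin_cases j <;>
    norm_num [Kr, Matrix.mul_apply, Fin.sum_univ_four,
      Matrix.one_apply, Matrix.smul_apply, Matrix.vecHead, Matrix.vecTail, Fin.ext_iff] <;>
    simp [Matrix.cons_val] <;> norm_num

lemma sqrt3_sq : (1 / Real.sqrt 3 : ℝ) * (1 / Real.sqrt 3) = 1 / 3 := by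
  have h3 : Real.sqrt 3 * Real.sqrt 3 = 3 := Real.mul_self_sqrt (by norm_num)
  rw [div_mul_div_comm, one_mul, h3]


/-- `J` is orthogonal with `J² = −I`, its centralizer in the group `G` of signed
permutation matrices is `⟨γ1, γ2⟩` of order 24, and `γ1³ = I`,
`γ1γ2γ1 = γ2γ1γ2` (the defining relations of `3[3]3`). -/
theorem complex_structure_centralizer :
    Jmat.transpose * Jmat = 1 ∧ Jmat * Jmat = -1 ∧
    {g : GL4 | g ∈ Subgroup.closure ({rho0, rho1, rho2, rho3} : Set GL4) ∧
        (g : Matrix (Fin 4) (Fin 4) ℝ) * Jmat = Jmat * (g : Matrix (Fin 4) (Fin 4) ℝ)}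
      = ((Subgroup.closure {gamma1, gamma2} : Subgroup GL4) : Set GL4) ∧
    Nat.card (Subgroup.closure {gamma1, gamma2} : Subgroup GL4) = 24 ∧
    gamma1 ^ 3 = 1 ∧ gamma1 * gamma2 * gamma1 = gamma2 * gamma1 * gamma2 := by
  have hJ : Jmat = (1 / Real.sqrt 3) • Kr := rfl
  refine ⟨?_, ?_, ?_, ?_, ?_, ?_⟩
  · rw [hJ, Matrix.transpose_smul, Matrix.smul_mul, Matrix.mul_smul, KrT_mul,
      smul_smul, smul_smul, sqrt3_sq]
    norm_num
  · rw [hJ, Matrix.smul_mul, Matrix.mul_smul, Kr_sq, smul_smul, smul_smul, sqrt3_sq]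
    norm_num
  · have : {g : GL4 | g ∈ Subgroup.closure ({rho0, rho1, rho2, rho3} : Set GL4) ∧
        (g : Matrix (Fin 4) (Fin 4) ℝ) * Jmat = Jmat * (g : Matrix (Fin 4) (Fin 4) ℝ)}
        = ((Grho ⊓ commJ : Subgroup GL4) : Set GL4) := by
      ext g
      simp only [Set.mem_setOf_eq, SetLike.mem_coe, Subgroup.mem_inf]
      exact ⟨fun h => ⟨h.1, h.2⟩, fun h => ⟨h.1, h.2⟩⟩
    rw [this, main_eq]; rfl
  · exact card24
  · apply Units.ext
    have h : gz1 * gz1 * gz1 = 1 := by decide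
    show (↑(gamma1 ^ 3) : Matrix (Fin 4) (Fin 4) ℝ) = ↑(1 : GL4)
    rw [Units.val_pow_eq_pow_val, Units.val_one, pow_succ, pow_succ, pow_one,
      gamma1_form, ← castm_mul, ← castm_mul, h, castm_one]
  · apply Units.ext
    have h : gz1 * gz2 * gz1 = gz2 * gz1 * gz2 := by decide
    show (↑(gamma1 * gamma2 * gamma1) : Matrix (Fin 4) (Fin 4) ℝ)
        = ↑(gamma2 * gamma1 * gamma2)
    rw [Units.val_mul, Units.val_mul, Units.val_mul, Units.val_mul,
      gamma1_form, gamma2_form, ← castm_mul, ← castm_mul, h, castm_mul, castm_mul]
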